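/- For every positive integer $b$ and every $r \in (0,1)$, $\frac{r(1-r)^{2^b-1}}{1-(1-r)^{2^b}} \leq \frac{1}{2^b}$. -/
import Mathlib


open Set

theorem A_le_inv_two_pow (b : ℕ) (hb : 1 ≤ b) (r : ℝ) (hr : r ∈ Ioo (0 : ℝ) 1) :
    r * (1 - r) ^ (2 ^ b - 1) / (1 - (1 - r) ^ (2 ^ b)) ≤ 1 / 2 ^ b := by
  obtain ⟨hr0, hr1⟩ := hr
  set n := 2 ^ b with hn
  have hn1 : 1 ≤ n := Nat.one_le_two_pow
  set q := 1 - r with hq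
  have hq0 : 0 ≤ q := by simp only [hq]; linarith
  have hq1 : q < 1 := by simp only [hq]; linarith
  have hqn : q ^ n < 1 := pow_lt_one₀ hq0 hq1 (by omega)
  have hden : 0 < 1 - q ^ n := by linarith
  have hgs := geom_sum_mul q n
  have hsum : 1 - q ^ n = r * ∑ i ∈ Finset.range n, q ^ i := by
    linear_combination hgs - (∑ i ∈ Finset.range n, q ^ i) * hq
  have hbound : (n : ℝ) * q ^ (n - 1) ≤ ∑ i ∈ Finset.range n, q ^ i := by
    calc (n : ℝ) * q ^ (n - 1) = ∑ _i ∈ Finset.range n, q ^ (n - 1) := by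
          rw [Finset.sum_const, Finset.card_range, nsmul_eq_mul]
      _ ≤ ∑ i ∈ Finset.range n, q ^ i := by
          apply Finset.sum_le_sum
          intro i hi
          exact pow_le_pow_of_le_one hq0 hq1.le (by
            have := Finset.mem_range.mp hi; omega)
  have hcast : ((n : ℕ) : ℝ) = 2 ^ b := by rw [hn]; push_cast; ring
  have hpow : (0:ℝ) < 2 ^ b := by positivity
  rw [div_le_div_iff₀ hden hpow]
  rw [← hcast]
  have hmul : r * ((n : ℝ) * q ^ (n - 1)) ≤ r * ∑ i ∈ Finset.range n, q ^ i :=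
    mul_le_mul_of_nonneg_left hbound hr0.le
  nlinarith [hmul, hsum]
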